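/- Scale invariance of the SDG search direction: Let ω > 0 and set g' = ω g and ξ' = ξ / ω (the gradient scales by ω under f ↦ ω f, while the BB-type step length scales by 1/ω, so ξ' g' = ξ g). Then: (a) ρ' := ξ' (1 − ε) = ρ / ω and π' := ⟪g', d⟫ / ‖g'‖² + ε ‖d‖ / ‖g'‖ = π / ω, hence β̂' := ρ' / (ρ' + π') = β̂; (b) the search direction is unchanged: β̂' • d − (1 − β̂') ξ' • g' = β̂ • d − (1 − β̂) ξ • g; and (c) for every β ∈ [0,1], the cosine is unchanged: −⟪g', β • d − (1 − β) ξ' • g'⟫ / (‖g'‖ ‖β • d − (1 − β) ξ' • g'‖) = Φ(β). -/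

import Mathlib

open scoped RealInnerProductSpace

noncomputable def dvec {n : ℕ} (g d : EuclideanSpace ℝ (Fin n)) (ξ β : ℝ) :
    EuclideanSpace ℝ (Fin n) :=
  β • d - ((1 - β) * ξ) • g

noncomputable def Phi {n : ℕ} (g d : EuclideanSpace ℝ (Fin n)) (ξ β : ℝ) : ℝ :=
  -⟪g, dvec g d ξ β⟫ / (‖g‖ * ‖dvec g d ξ β‖)

noncomputable def rho (ξ ε : ℝ) : ℝ := ξ * (1 - ε)

noncomputable def piV {n : ℕ} (g d : EuclideanSpace ℝ (Fin n)) (ε : ℝ) : ℝ :=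
  ⟪g, d⟫ / ‖g‖ ^ 2 + ε * ‖d‖ / ‖g‖

noncomputable def betahat {n : ℕ} (g d : EuclideanSpace ℝ (Fin n)) (ξ ε : ℝ) : ℝ :=
  rho ξ ε / (rho ξ ε + piV g d ε)

/-- Scale invariance of the SDG search direction: with g' = ω g and ξ' = ξ/ω,
(a) ρ' = ρ/ω, π' = π/ω, β̂' = β̂; (b) the search direction is unchanged;
(c) the cosine Φ is unchanged on [0,1]. -/
theorem sdg_scale_invariance {n : ℕ} (g d : EuclideanSpace ℝ (Fin n))
    (hind : LinearIndependent ℝ ![g, d]) (ε ξ : ℝ)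
    (hε : ε ∈ Set.Ioo (0 : ℝ) 1) (hξ : 0 < ξ)
    (ω : ℝ) (hω : 0 < ω) :
    (rho (ξ / ω) ε = rho ξ ε / ω ∧
     piV (ω • g) d ε = piV g d ε / ω ∧
     betahat (ω • g) d (ξ / ω) ε = betahat g d ξ ε) ∧
    dvec (ω • g) d (ξ / ω) (betahat (ω • g) d (ξ / ω) ε) =
      dvec g d ξ (betahat g d ξ ε) ∧
    ∀ β ∈ Set.Icc (0 : ℝ) 1, Phi (ω • g) d (ξ / ω) β = Phi g d ξ β := by
  have hω0 : ω ≠ 0 := ne_of_gt hω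
  have hg : g ≠ 0 := by
    have := hind.ne_zero 0
    simpa using this
  have hgn : ‖g‖ ≠ 0 := norm_ne_zero_iff.mpr hg
  have hnorm : ‖ω • g‖ = ω * ‖g‖ := by
    rw [norm_smul, Real.norm_eq_abs, abs_of_pos hω]
  have hrho : rho (ξ / ω) ε = rho ξ ε / ω := by
    unfold rho; ring
  have hpi : piV (ω • g) d ε = piV g d ε / ω := by
    unfold piV
    rw [real_inner_smul_left, hnorm]
    field_simp
  have hbeta : betahat (ω • g) d (ξ / ω) ε = betahat g d ξ ε := by
    unfold betahat
    rw [hrho, hpi]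
    rw [← add_div, div_div_div_cancel_right₀ hω0]
  have hdvec : ∀ β, dvec (ω • g) d (ξ / ω) β = dvec g d ξ β := by
    intro β
    unfold dvec
    rw [smul_smul]
    congr 2
    field_simp
  refine ⟨⟨hrho, hpi, hbeta⟩, ?_, ?_⟩
  · rw [hdvec, hbeta]
  · intro β hβ
    unfold Phi
    rw [hdvec, real_inner_smul_left, hnorm, neg_div, neg_div, mul_assoc,
      mul_div_mul_left _ _ hω0]
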